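/- Let K be a conformal matching covered subgraph of a simple bipartite matching covered graph H, and let e be a removable edge of K. Then e is a removable edge of H. -/

import Mathlib

open Relation SimpleGraph
set_option linter.unusedSectionVars false
set_option linter.unusedVariables false


/-! Preamble: definitions for matching covered graphs, bricks, removable
doubletons, R-compatible/R-thin edges, retracts, ladders, partial biwheels,
R-configurations, and the eleven infinite families. -/

/-- The graph has a perfect matching. -/
def HasPerfMatching {V : Type*} (G : SimpleGraph V) : Prop :=
  ∃ M : G.Subgraph, M.IsPerfectMatching

/-- A graph (with at least two vertices) is matching covered if it is connected
and each of its edges lies in some perfect matching. -/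
def MatchingCovered {V : Type*} (G : SimpleGraph V) : Prop :=
  2 ≤ Nat.card V ∧ G.Connected ∧
    ∀ e ∈ G.edgeSet, ∃ M : G.Subgraph, M.IsPerfectMatching ∧ e ∈ M.edgeSet

/-- An edge of a matching covered graph is removable if deleting it leaves a
matching covered graph. -/
def RemovableEdge {V : Type*} (G : SimpleGraph V) (e : Sym2 V) : Prop :=
  e ∈ G.edgeSet ∧ MatchingCovered (G.deleteEdges {e})

/-- The number of odd connected components. -/
noncomputable def oddCompCount {V : Type*} (G : SimpleGraph V) : ℕ :=
  Nat.card {c : G.ConnectedComponent // Odd (Nat.card c.supp)}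

/-- `S` is a barrier of `G`: `S` is nonempty and the number of odd components
of `G − S` equals `|S|`. -/
def IsBarrierOf {V : Type*} (G : SimpleGraph V) (S : Set V) : Prop :=
  S.Nonempty ∧ oddCompCount (G.induce (Sᶜ : Set V)) = S.ncard

/-- Bicritical: at least four vertices, and deleting any two distinct vertices
leaves a graph with a perfect matching. -/
def BicriticalGraph {V : Type*} (G : SimpleGraph V) : Prop :=
  4 ≤ Nat.card V ∧ ∀ u v : V, u ≠ v →
    HasPerfMatching (G.induce (({u, v} : Set V)ᶜ))

/-- 3-connected: at least four vertices, and deleting any set of at most two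
vertices leaves a connected graph. -/
def ThreeConnectedGraph {V : Type*} (G : SimpleGraph V) : Prop :=
  4 ≤ Nat.card V ∧ ∀ S : Set V, S.ncard ≤ 2 → (G.induce (Sᶜ : Set V)).Connected

/-- A brick is a 3-connected bicritical graph. -/
def BrickGraph {V : Type*} (G : SimpleGraph V) : Prop :=
  ThreeConnectedGraph G ∧ BicriticalGraph G

/-- `A`, `B` form a bipartition of `G`. -/
def BipartitionOf {V : Type*} (G : SimpleGraph V) (A B : Set V) : Prop :=
  A ∪ B = Set.univ ∧ Disjoint A B ∧ ∀ ⦃u v : V⦄, G.Adj u v → (u ∈ A ↔ v ∈ B)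

/-- `G` is bipartite. -/
def BipartiteGraph {V : Type*} (G : SimpleGraph V) : Prop :=
  ∃ A B : Set V, BipartitionOf G A B

/-- `{α, β}` is a removable doubleton of `G`: a pair of distinct edges whose
deletion leaves a bipartite matching covered graph. -/
def RemovableDoubleton {V : Type*} (G : SimpleGraph V) (α β : Sym2 V) : Prop :=
  α ≠ β ∧ α ∈ G.edgeSet ∧ β ∈ G.edgeSet ∧
    BipartiteGraph (G.deleteEdges {α, β}) ∧ MatchingCovered (G.deleteEdges {α, β})

/-- An `R`-brick: a brick with a fixed removable doubleton `R = {α, β}`. -/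
def RBrick {V : Type*} (G : SimpleGraph V) (α β : Sym2 V) : Prop :=
  BrickGraph G ∧ RemovableDoubleton G α β

/-- `V(R)`: the set of the four ends of the doubleton edges. -/
def VR {V : Type*} (α β : Sym2 V) : Set V := {v | v ∈ α ∨ v ∈ β}

/-- `e` is `R`-compatible: it is an edge of `H := G − R` and is removable in
both `G` and `H`. -/
def RCompatible {V : Type*} (G : SimpleGraph V) (α β e : Sym2 V) : Prop :=
  e ∈ (G.deleteEdges {α, β}).edgeSet ∧
    MatchingCovered (G.deleteEdges {e}) ∧
    MatchingCovered ((G.deleteEdges {α, β}).deleteEdges {e})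

/-- `e` is `R`-thin: `R`-compatible, and every barrier of `G − e` has at most
two vertices. -/
def RThin {V : Type*} (G : SimpleGraph V) (α β e : Sym2 V) : Prop :=
  RCompatible G α β e ∧
    ∀ S : Set V, IsBarrierOf (G.deleteEdges {e}) S → S.ncard ≤ 2

/-- The number of maximal nontrivial barriers of a graph. -/
noncomputable def barrierIndex {V : Type*} (G : SimpleGraph V) : ℕ :=
  Set.ncard {S : Set V | IsBarrierOf G S ∧ 2 ≤ S.ncard ∧
    ∀ T : Set V, IsBarrierOf G T → S ⊆ T → T = S}

/-- Degree of a vertex (as the cardinality of its neighbourhood). -/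
noncomputable def degOf {V : Type*} (G : SimpleGraph V) (v : V) : ℕ :=
  (G.neighborSet v).ncard

/-- The relation identifying each degree-two vertex with its neighbours
(bicontraction of all degree-two vertices at once). -/
def bicontractPairRel {V : Type*} (G : SimpleGraph V) (u v : V) : Prop :=
  G.Adj u v ∧ (degOf G u = 2 ∨ degOf G v = 2)

/-- The vertex identifications performed when taking the retract. -/
def retractSetoid {V : Type*} (G : SimpleGraph V) : Setoid V :=
  Relation.EqvGen.setoid (bicontractPairRel G)

/-- The retract of `G` (as a simple graph on the quotient). -/
def retractGraph {V : Type*} (G : SimpleGraph V) :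
    SimpleGraph (Quotient (retractSetoid G)) where
  Adj X Y := X ≠ Y ∧ ∃ u v : V,
    Quotient.mk (retractSetoid G) u = X ∧ Quotient.mk (retractSetoid G) v = Y ∧ G.Adj u v
  symm := ⟨by
    rintro X Y ⟨hne, u, v, hu, hv, huv⟩
    exact ⟨hne.symm, v, u, hv, hu, huv.symm⟩⟩
  loopless := ⟨by
    rintro X ⟨hne, -⟩
    exact hne rfl⟩

/-- The retract of `G` has a pair of parallel edges. -/
def retractHasParallel {V : Type*} (G : SimpleGraph V) : Prop :=
  ∃ p q p' q' : V, G.Adj p q ∧ G.Adj p' q' ∧ s(p, q) ≠ s(p', q') ∧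
    ¬ Relation.EqvGen (bicontractPairRel G) p q ∧
    ((Relation.EqvGen (bicontractPairRel G) p p' ∧
        Relation.EqvGen (bicontractPairRel G) q q') ∨
     (Relation.EqvGen (bicontractPairRel G) p q' ∧
        Relation.EqvGen (bicontractPairRel G) q p'))

/-- `e` is strictly `R`-thin: `R`-thin and the retract of `G − e` has no
parallel edges. -/
def StrictlyRThin {V : Type*} (G : SimpleGraph V) (α β e : Sym2 V) : Prop :=
  RThin G α β e ∧ ¬ retractHasParallel (G.deleteEdges {e})

/-- The ladder with `m` rungs: two paths `x₀…x_{m-1}` (first coordinate `0`)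
and `y₀…y_{m-1}` (first coordinate `1`) together with the rungs `xᵢyᵢ`. -/
def ladderGraph (m : ℕ) : SimpleGraph (Fin 2 × Fin m) :=
  SimpleGraph.fromRel (fun p q =>
    (p.1 = q.1 ∧ p.2.val + 1 = q.2.val) ∨ (p.1 ≠ q.1 ∧ p.2 = q.2))

/-- The partial biwheel on the odd path `x₀…x_{2k-1}` (the `inl` vertices)
with hubs `u = inr 0` (joined to the even-indexed path vertices) and
`w = inr 1` (joined to the odd-indexed path vertices). -/
def biwheelGraph (k : ℕ) : SimpleGraph (Fin (2 * k) ⊕ Fin 2) :=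
  SimpleGraph.fromRel (fun p q =>
    match p, q with
    | Sum.inl i, Sum.inl j => i.val + 1 = j.val
    | Sum.inr h, Sum.inl i => (h = 0 ∧ i.val % 2 = 0) ∨ (h = 1 ∧ i.val % 2 = 1)
    | _, _ => False)

/-- The subgraph `K` of `Γ` is a ladder with `m` rungs and corners `a u b w`:
`au` and `bw` are its external rungs, labelled according to the convention
that `a` and `w` lie in one colour class and `b` and `u` in the other. -/
def LadderOn {W : Type*} (Γ : SimpleGraph W) (K : Γ.Subgraph) (m : ℕ)
    (a u b w : W) : Prop :=
  ∃ (hm : 3 ≤ m) (φ : ladderGraph m ≃g K.coe),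
    (φ ((0 : Fin 2), (⟨0, by omega⟩ : Fin m))).val = a ∧
    (φ ((1 : Fin 2), (⟨0, by omega⟩ : Fin m))).val = u ∧
    (if m % 2 = 1 then
        (φ ((0 : Fin 2), (⟨m - 1, by omega⟩ : Fin m))).val = w ∧
        (φ ((1 : Fin 2), (⟨m - 1, by omega⟩ : Fin m))).val = b
      else
        (φ ((1 : Fin 2), (⟨m - 1, by omega⟩ : Fin m))).val = w ∧
        (φ ((0 : Fin 2), (⟨m - 1, by omega⟩ : Fin m))).val = b)

/-- The subgraph `K` of `Γ` is a partial biwheel (parameter `k`, order `2k+2`)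
with ends `a`, `b` and hubs `u`, `w`; its external spokes are `au` and `bw`. -/
def BiwheelOn {W : Type*} (Γ : SimpleGraph W) (K : Γ.Subgraph) (k : ℕ)
    (a u b w : W) : Prop :=
  ∃ (hk : 2 ≤ k) (φ : biwheelGraph k ≃g K.coe),
    (φ (Sum.inl (⟨0, by omega⟩ : Fin (2 * k)))).val = a ∧
    (φ (Sum.inl (⟨2 * k - 1, by omega⟩ : Fin (2 * k)))).val = b ∧
    (φ (Sum.inr 0)).val = u ∧
    (φ (Sum.inr 1)).val = w

/-- Truncated biwheel: a spanning partial biwheel plus the edges `aw`, `bu`. -/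
def IsTruncatedBiwheel {V : Type*} (G : SimpleGraph V) : Prop :=
  ∃ (K : G.Subgraph) (k : ℕ) (a u b w : V),
    BiwheelOn G K k a u b w ∧ K.verts = Set.univ ∧
    G.edgeSet = K.edgeSet ∪ {s(a, w), s(b, u)}

/-- Prism: a spanning odd ladder plus the edges `aw`, `bu`. -/
def IsPrism {V : Type*} (G : SimpleGraph V) : Prop :=
  ∃ (K : G.Subgraph) (m : ℕ) (a u b w : V),
    Odd m ∧ LadderOn G K m a u b w ∧ K.verts = Set.univ ∧
    G.edgeSet = K.edgeSet ∪ {s(a, w), s(b, u)}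

/-- Möbius ladder: a spanning even ladder plus the edges `aw`, `bu`;
by convention `K₄` is also a Möbius ladder. -/
def IsMobiusLadder {V : Type*} (G : SimpleGraph V) : Prop :=
  (∃ (K : G.Subgraph) (m : ℕ) (a u b w : V),
    Even m ∧ LadderOn G K m a u b w ∧ K.verts = Set.univ ∧
    G.edgeSet = K.edgeSet ∪ {s(a, w), s(b, u)}) ∨
  Nonempty (G ≃g (⊤ : SimpleGraph (Fin 4)))

/-- Staircase: a ladder plus two new vertices `a₂`, `b₂` and the five edges
`a a₂`, `u a₂`, `b b₂`, `w b₂`, `a₂ b₂`. -/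
def IsStaircase {V : Type*} (G : SimpleGraph V) : Prop :=
  ∃ (K : G.Subgraph) (m : ℕ) (a u b w a2 b2 : V),
    LadderOn G K m a u b w ∧
    a2 ∉ K.verts ∧ b2 ∉ K.verts ∧ a2 ≠ b2 ∧
    K.verts ∪ {a2, b2} = Set.univ ∧
    G.edgeSet = K.edgeSet ∪ {s(a, a2), s(u, a2), s(b, b2), s(w, b2), s(a2, b2)}

/-- Pseudo-biwheel: a partial biwheel of order at least eight plus two new
vertices `a₂`, `b₂` and the five edges `a a₂`, `u a₂`, `b b₂`, `w b₂`,
`a₂ b₂`. -/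
def IsPseudoBiwheel {V : Type*} (G : SimpleGraph V) : Prop :=
  ∃ (K : G.Subgraph) (k : ℕ) (a u b w a2 b2 : V),
    3 ≤ k ∧ BiwheelOn G K k a u b w ∧
    a2 ∉ K.verts ∧ b2 ∉ K.verts ∧ a2 ≠ b2 ∧
    K.verts ∪ {a2, b2} = Set.univ ∧
    G.edgeSet = K.edgeSet ∪ {s(a, a2), s(u, a2), s(b, b2), s(w, b2), s(a2, b2)}

/-- Double biwheel of type I: two partial biwheels sharing precisely their
hubs `u`, `w`, plus the edges `a₁a₂` and `b₁b₂`. -/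
def IsDoubleBiwheelI {V : Type*} (G : SimpleGraph V) : Prop :=
  ∃ (K1 K2 : G.Subgraph) (k1 k2 : ℕ) (a1 b1 a2 b2 u w : V),
    BiwheelOn G K1 k1 a1 u b1 w ∧ BiwheelOn G K2 k2 a2 u b2 w ∧
    K1.verts ∩ K2.verts = {u, w} ∧ K1.verts ∪ K2.verts = Set.univ ∧
    G.edgeSet = K1.edgeSet ∪ K2.edgeSet ∪ {s(a1, a2), s(b1, b2)}

/-- Double ladder of type I. -/
def IsDoubleLadderI {V : Type*} (G : SimpleGraph V) : Prop :=
  ∃ (K1 K2 : G.Subgraph) (m1 m2 : ℕ) (a1 b1 a2 b2 u w : V),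
    LadderOn G K1 m1 a1 u b1 w ∧ LadderOn G K2 m2 a2 u b2 w ∧
    K1.verts ∩ K2.verts = {u, w} ∧ K1.verts ∪ K2.verts = Set.univ ∧
    G.edgeSet = K1.edgeSet ∪ K2.edgeSet ∪ {s(a1, a2), s(b1, b2)}

/-- Laddered biwheel of type I. -/
def IsLadderedBiwheelI {V : Type*} (G : SimpleGraph V) : Prop :=
  ∃ (K1 K2 : G.Subgraph) (k1 m2 : ℕ) (a1 b1 a2 b2 u w : V),
    BiwheelOn G K1 k1 a1 u b1 w ∧ LadderOn G K2 m2 a2 u b2 w ∧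
    K1.verts ∩ K2.verts = {u, w} ∧ K1.verts ∪ K2.verts = Set.univ ∧
    G.edgeSet = K1.edgeSet ∪ K2.edgeSet ∪ {s(a1, a2), s(b1, b2)}

/-- Double biwheel of type II: two vertex-disjoint partial biwheels of order
at least eight plus the four edges `a₁a₂`, `b₁b₂`, `u₁w₂`, `w₁u₂`. -/
def IsDoubleBiwheelII {V : Type*} (G : SimpleGraph V) : Prop :=
  ∃ (K1 K2 : G.Subgraph) (k1 k2 : ℕ) (a1 u1 b1 w1 a2 u2 b2 w2 : V),
    3 ≤ k1 ∧ 3 ≤ k2 ∧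
    BiwheelOn G K1 k1 a1 u1 b1 w1 ∧ BiwheelOn G K2 k2 a2 u2 b2 w2 ∧
    K1.verts ∩ K2.verts = ∅ ∧ K1.verts ∪ K2.verts = Set.univ ∧
    G.edgeSet = K1.edgeSet ∪ K2.edgeSet ∪
      {s(a1, a2), s(b1, b2), s(u1, w2), s(w1, u2)}

/-- Double ladder of type II. -/
def IsDoubleLadderII {V : Type*} (G : SimpleGraph V) : Prop :=
  ∃ (K1 K2 : G.Subgraph) (m1 m2 : ℕ) (a1 u1 b1 w1 a2 u2 b2 w2 : V),
    LadderOn G K1 m1 a1 u1 b1 w1 ∧ LadderOn G K2 m2 a2 u2 b2 w2 ∧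
    K1.verts ∩ K2.verts = ∅ ∧ K1.verts ∪ K2.verts = Set.univ ∧
    G.edgeSet = K1.edgeSet ∪ K2.edgeSet ∪
      {s(a1, a2), s(b1, b2), s(u1, w2), s(w1, u2)}

/-- Laddered biwheel of type II. -/
def IsLadderedBiwheelII {V : Type*} (G : SimpleGraph V) : Prop :=
  ∃ (K1 K2 : G.Subgraph) (k1 m2 : ℕ) (a1 u1 b1 w1 a2 u2 b2 w2 : V),
    3 ≤ k1 ∧
    BiwheelOn G K1 k1 a1 u1 b1 w1 ∧ LadderOn G K2 m2 a2 u2 b2 w2 ∧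
    K1.verts ∩ K2.verts = ∅ ∧ K1.verts ∪ K2.verts = Set.univ ∧
    G.edgeSet = K1.edgeSet ∪ K2.edgeSet ∪
      {s(a1, a2), s(b1, b2), s(u1, w2), s(w1, u2)}

/-- Membership in one of the eleven infinite families. -/
def InEleven {V : Type*} (G : SimpleGraph V) : Prop :=
  IsTruncatedBiwheel G ∨ IsPrism G ∨ IsMobiusLadder G ∨ IsStaircase G ∨
  IsPseudoBiwheel G ∨ IsDoubleBiwheelI G ∨ IsDoubleLadderI G ∨
  IsLadderedBiwheelI G ∨ IsDoubleBiwheelII G ∨ IsDoubleLadderII G ∨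
  IsLadderedBiwheelII G

/-- An `R`-ladder configuration: a subgraph `K` of `H := G − R` which is a
ladder with external rungs `au` and `bw` (free corners `u`, `w`) such that
every vertex of `K` except possibly `u` and `w` is cubic in `G`, the corners
`a` and `b` lie in `V(R)`, and every internal rung is an `R`-thin edge of `G`
whose index is two. -/
def RLadderConfig {V : Type*} (G : SimpleGraph V) (α β : Sym2 V)
    (K : (G.deleteEdges {α, β}).Subgraph) (a u b w : V) : Prop :=
  ∃ (m : ℕ) (hm : 3 ≤ m) (φ : ladderGraph m ≃g K.coe),
    (φ ((0 : Fin 2), (⟨0, by omega⟩ : Fin m))).val = a ∧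
    (φ ((1 : Fin 2), (⟨0, by omega⟩ : Fin m))).val = u ∧
    (if m % 2 = 1 then
        (φ ((0 : Fin 2), (⟨m - 1, by omega⟩ : Fin m))).val = w ∧
        (φ ((1 : Fin 2), (⟨m - 1, by omega⟩ : Fin m))).val = b
      else
        (φ ((1 : Fin 2), (⟨m - 1, by omega⟩ : Fin m))).val = w ∧
        (φ ((0 : Fin 2), (⟨m - 1, by omega⟩ : Fin m))).val = b) ∧
    (∀ v ∈ K.verts, v ≠ u → v ≠ w → degOf G v = 3) ∧
    a ∈ VR α β ∧ b ∈ VR α β ∧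
    (∀ i : Fin m, 0 < i.val → i.val < m - 1 →
      RThin G α β s((φ ((0 : Fin 2), i)).val, (φ ((1 : Fin 2), i)).val) ∧
      barrierIndex
        (G.deleteEdges {s((φ ((0 : Fin 2), i)).val, (φ ((1 : Fin 2), i)).val)}) = 2)

/-- An `R`-biwheel configuration: a subgraph `K` of `H := G − R` which is a
partial biwheel with external spokes `au` and `bw` (hubs `u`, `w`) such that
the hubs are not cubic in `G`, every other vertex of `K` is cubic in `G`, the
ends `a` and `b` lie in `V(R)`, and every internal spoke is an `R`-thin edge
of `G` whose index is one. -/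
def RBiwheelConfig {V : Type*} (G : SimpleGraph V) (α β : Sym2 V)
    (K : (G.deleteEdges {α, β}).Subgraph) (a u b w : V) : Prop :=
  ∃ (k : ℕ) (hk : 2 ≤ k) (φ : biwheelGraph k ≃g K.coe),
    (φ (Sum.inl (⟨0, by omega⟩ : Fin (2 * k)))).val = a ∧
    (φ (Sum.inl (⟨2 * k - 1, by omega⟩ : Fin (2 * k)))).val = b ∧
    (φ (Sum.inr 0)).val = u ∧
    (φ (Sum.inr 1)).val = w ∧
    degOf G u ≠ 3 ∧ degOf G w ≠ 3 ∧
    (∀ v ∈ K.verts, v ≠ u → v ≠ w → degOf G v = 3) ∧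
    a ∈ VR α β ∧ b ∈ VR α β ∧
    (∀ e ∈ K.edgeSet, (u ∈ e ∨ w ∈ e) → e ≠ s(a, u) → e ≠ s(b, w) →
      RThin G α β e ∧ barrierIndex (G.deleteEdges {e}) = 1)

/-- An `R`-configuration: an `R`-ladder or an `R`-biwheel, with free corners
`u` and `w`. -/
def RConfig {V : Type*} (G : SimpleGraph V) (α β : Sym2 V)
    (K : (G.deleteEdges {α, β}).Subgraph) (a u b w : V) : Prop :=
  RLadderConfig G α β K a u b w ∨ RBiwheelConfig G α β K a u b w

/-- A 4-cycle on the four (distinct) vertices `v0 v1 v2 v3`. -/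
def Is4Cycle {V : Type*} (H : SimpleGraph V) (v0 v1 v2 v3 : V) : Prop :=
  v0 ≠ v1 ∧ v0 ≠ v2 ∧ v0 ≠ v3 ∧ v1 ≠ v2 ∧ v1 ≠ v3 ∧ v2 ≠ v3 ∧
  H.Adj v0 v1 ∧ H.Adj v1 v2 ∧ H.Adj v2 v3 ∧ H.Adj v3 v0

/-- The cut `∂(X)`. -/
def edgeCutOf {V : Type*} (G : SimpleGraph V) (X : Set V) : Set (Sym2 V) :=
  {e | e ∈ G.edgeSet ∧ ∃ p q : V, e = s(p, q) ∧ p ∈ X ∧ q ∉ X}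

/-- The cut `∂(X)` is tight: every perfect matching contains exactly one of
its edges. -/
def TightCut {V : Type*} (G : SimpleGraph V) (X : Set V) : Prop :=
  ∀ M : G.Subgraph, M.IsPerfectMatching → (M.edgeSet ∩ edgeCutOf G X).ncard = 1

/-- A brace: a bipartite matching covered graph with no nontrivial tight cut. -/
def IsBrace {V : Type*} (G : SimpleGraph V) : Prop :=
  BipartiteGraph G ∧ MatchingCovered G ∧
    ¬ ∃ X : Set V, 2 ≤ X.ncard ∧ 2 ≤ Xᶜ.ncard ∧ TightCut G X
open Relation SimpleGraph

section prelim
variable {α : Type*}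

noncomputable def pmF {G : SimpleGraph α} {M : G.Subgraph} (h : M.IsPerfectMatching) (v : α) : α :=
  (SimpleGraph.Subgraph.isPerfectMatching_iff.mp h v).choose

lemma pmF_adj {G : SimpleGraph α} {M : G.Subgraph} (h : M.IsPerfectMatching) (v : α) :
    M.Adj v (pmF h v) :=
  (SimpleGraph.Subgraph.isPerfectMatching_iff.mp h v).choose_spec.1

lemma pmF_eq {G : SimpleGraph α} {M : G.Subgraph} (h : M.IsPerfectMatching) {v w : α}
    (hw : M.Adj v w) : w = pmF h v :=
  ((SimpleGraph.Subgraph.isPerfectMatching_iff.mp h v).choose_spec.2 w hw)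

lemma pmF_invol {G : SimpleGraph α} {M : G.Subgraph} (h : M.IsPerfectMatching) (v : α) :
    pmF h (pmF h v) = v := (pmF_eq h ((pmF_adj h v).symm)).symm

lemma reach_orbit [Finite α] (σ : Equiv.Perm α) (R : α → α → Prop) (B : Set α)
    (hB : ∀ u ∈ B, σ u ∈ B)
    (hstep : ∀ u ∈ B, σ u ≠ u → Relation.ReflTransGen R u (σ u)) (b : α) (hb : b ∈ B) :
    Relation.ReflTransGen R b (σ.symm b) := by
  by_cases h0 : σ b = b
  · have hs : σ.symm b = b := (Equiv.symm_apply_eq σ).mpr h0.symm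
    rw [hs]
  have hpow : ∀ n : ℕ, (σ ^ (n+1)) b = σ ((σ ^ n) b) := by
    intro n
    rw [pow_succ', Equiv.Perm.mul_apply]
  have hnofix : ∀ n : ℕ, σ ((σ ^ n) b) ≠ (σ ^ n) b := by
    intro n hfix
    apply h0
    have h2 : (σ ^ n) (σ b) = (σ ^ n) b := by
      rw [← Equiv.Perm.mul_apply, ← pow_succ, pow_succ', Equiv.Perm.mul_apply, hfix]
    exact (σ ^ n).injective h2
  have hall : ∀ n : ℕ, (σ ^ n) b ∈ B ∧ Relation.ReflTransGen R b ((σ ^ n) b) := by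
    intro n
    induction n with
    | zero => simpa using ⟨hb, Relation.ReflTransGen.refl⟩
    | succ n ih =>
      rw [hpow n]
      exact ⟨hB _ ih.1, ih.2.trans (hstep _ ih.1 (hnofix n))⟩
  obtain ⟨i, j, hij, hfij⟩ := Finite.exists_ne_map_eq_of_infinite (fun n : ℕ => (σ ^ n) b)
  wlog hlt : i < j generalizing i j
  · exact this j i hij.symm hfij.symm (by omega)
  have hk : (σ ^ (j - i)) b = b := by
    have h3 : (σ ^ i) ((σ ^ (j-i)) b) = (σ ^ i) b := by
      rw [← Equiv.Perm.mul_apply, ← pow_add]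
      have h4 : i + (j - i) = j := by omega
      rw [h4]; exact hfij.symm
    exact (σ ^ i).injective h3
  have hss : σ.symm b = (σ ^ (j - i - 1)) b := by
    apply σ.injective
    rw [Equiv.apply_symm_apply, ← hpow]
    have h5 : j - i - 1 + 1 = j - i := by omega
    rw [h5]; exact hk.symm
  rw [hss]
  exact (hall _).2

end prelim

section walk
variable {α : Type*} [Finite α] {A B : Set α}
  {G₁ G₂ : SimpleGraph α} {M₀ : G₁.Subgraph} {N : G₂.Subgraph}

lemma side_switchB (hdis : Disjoint A B) (huniv : A ∪ B = Set.univ)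
    (hc : ∀ ⦃u v : α⦄, M₀.Adj u v → (u ∈ A ↔ v ∈ B)) {u v : α}
    (h : M₀.Adj u v) (hu : u ∈ B) : v ∈ A := by
  have hna : u ∉ A := fun ha => hdis.le_bot ⟨ha, hu⟩ |>.elim
  have h2 : v ∉ B := fun hvb => hna ((hc h).mpr hvb)
  have h3 := Set.mem_union v A B
  rw [huniv] at h3
  tauto

lemma side_switchA (hc : ∀ ⦃u v : α⦄, M₀.Adj u v → (u ∈ A ↔ v ∈ B)) {u v : α}
    (h : M₀.Adj u v) (hu : u ∈ A) : v ∈ B := (hc h).mp hu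

lemma walkBA (hdis : Disjoint A B) (huniv : A ∪ B = Set.univ)
    (hM₀ : M₀.IsPerfectMatching) (hN : N.IsPerfectMatching)
    (hc₀ : ∀ ⦃u v : α⦄, M₀.Adj u v → (u ∈ A ↔ v ∈ B))
    (hcN : ∀ ⦃u v : α⦄, N.Adj u v → (u ∈ A ↔ v ∈ B))
    {b a : α} (hb : b ∈ B) (hba : N.Adj b a) :
    Relation.ReflTransGen
      (fun u v => (u ∈ B ∧ M₀.Adj u v) ∨ (u ∈ A ∧ N.Adj u v ∧ ¬ M₀.Adj u v)) b a := by
  have ha : a = pmF hN b := pmF_eq hN hba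
  let σ : Equiv.Perm α :=
    ⟨fun u => pmF hN (pmF hM₀ u), fun u => pmF hM₀ (pmF hN u),
      fun u => by simp [pmF_invol], fun u => by simp [pmF_invol]⟩
  have hσ : ∀ u, σ u = pmF hN (pmF hM₀ u) := fun _ => rfl
  have hσs : ∀ u, σ.symm u = pmF hM₀ (pmF hN u) := fun _ => rfl
  have hBc : ∀ u ∈ B, σ u ∈ B := by
    intro u hu
    exact side_switchA hcN (pmF_adj hN (pmF hM₀ u))
      (side_switchB hdis huniv hc₀ (pmF_adj hM₀ u) hu)
  have hstep : ∀ u ∈ B, σ u ≠ u →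
      Relation.ReflTransGen
        (fun u v => (u ∈ B ∧ M₀.Adj u v) ∨ (u ∈ A ∧ N.Adj u v ∧ ¬ M₀.Adj u v)) u (σ u) := by
    intro u hu hne
    have h1 : pmF hM₀ u ∈ A := side_switchB hdis huniv hc₀ (pmF_adj hM₀ u) hu
    have harc1 : (u ∈ B ∧ M₀.Adj u (pmF hM₀ u)) ∨
        (u ∈ A ∧ N.Adj u (pmF hM₀ u) ∧ ¬ M₀.Adj u (pmF hM₀ u)) := Or.inl ⟨hu, pmF_adj hM₀ u⟩
    have harc2 : (pmF hM₀ u ∈ B ∧ M₀.Adj (pmF hM₀ u) (σ u)) ∨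
        (pmF hM₀ u ∈ A ∧ N.Adj (pmF hM₀ u) (σ u) ∧ ¬ M₀.Adj (pmF hM₀ u) (σ u)) := by
      refine Or.inr ⟨h1, pmF_adj hN (pmF hM₀ u), fun hcon => hne ?_⟩
      have h5 := pmF_eq hM₀ hcon
      rw [pmF_invol] at h5
      exact h5
    exact Relation.ReflTransGen.tail
      (r := fun u v => (u ∈ B ∧ M₀.Adj u v) ∨ (u ∈ A ∧ N.Adj u v ∧ ¬ M₀.Adj u v))
      (Relation.ReflTransGen.single harc1) harc2
  have hmain := reach_orbit σ _ B hBc hstep b hb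
  rw [hσs] at hmain
  have hafin : a ∈ A := ha ▸ side_switchB hdis huniv hcN (pmF_adj hN b) hb
  have hlast : (pmF hM₀ (pmF hN b) ∈ B ∧ M₀.Adj (pmF hM₀ (pmF hN b)) a) ∨
      (pmF hM₀ (pmF hN b) ∈ A ∧ N.Adj (pmF hM₀ (pmF hN b)) a ∧
        ¬ M₀.Adj (pmF hM₀ (pmF hN b)) a) := by
    refine Or.inl ⟨?_, ?_⟩
    · exact side_switchA hc₀ (pmF_adj hM₀ (pmF hN b)) (ha ▸ hafin)
    · rw [ha]
      exact (pmF_adj hM₀ (pmF hN b)).symm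
  exact hmain.tail hlast

lemma walkAB (hdis : Disjoint A B) (huniv : A ∪ B = Set.univ)
    (hM₀ : M₀.IsPerfectMatching) (hN : N.IsPerfectMatching)
    (hc₀ : ∀ ⦃u v : α⦄, M₀.Adj u v → (u ∈ A ↔ v ∈ B))
    (hcN : ∀ ⦃u v : α⦄, N.Adj u v → (u ∈ A ↔ v ∈ B))
    {a v : α} (haA : a ∈ A) (hav : M₀.Adj a v) (hne : ¬ M₀.Adj a (pmF hN a)) :
    Relation.ReflTransGen
      (fun u v => (u ∈ B ∧ M₀.Adj u v) ∨ (u ∈ A ∧ N.Adj u v ∧ ¬ M₀.Adj u v)) a v := by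
  have hv : v = pmF hM₀ a := pmF_eq hM₀ hav
  let τ : Equiv.Perm α :=
    ⟨fun u => pmF hM₀ (pmF hN u), fun u => pmF hN (pmF hM₀ u),
      fun u => by simp [pmF_invol], fun u => by simp [pmF_invol]⟩
  have hτ : ∀ u, τ u = pmF hM₀ (pmF hN u) := fun _ => rfl
  have hτs : ∀ u, τ.symm u = pmF hN (pmF hM₀ u) := fun _ => rfl
  have hAc : ∀ u ∈ A, τ u ∈ A := by
    intro u hu
    exact side_switchB hdis huniv hc₀ (pmF_adj hM₀ (pmF hN u))
      (side_switchA hcN (pmF_adj hN u) hu)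
  have hstep : ∀ u ∈ A, τ u ≠ u →
      Relation.ReflTransGen
        (fun u v => (u ∈ B ∧ M₀.Adj u v) ∨ (u ∈ A ∧ N.Adj u v ∧ ¬ M₀.Adj u v)) u (τ u) := by
    intro u hu hne'
    have h1 : pmF hN u ∈ B := side_switchA hcN (pmF_adj hN u) hu
    have harc1 : (u ∈ B ∧ M₀.Adj u (pmF hN u)) ∨
        (u ∈ A ∧ N.Adj u (pmF hN u) ∧ ¬ M₀.Adj u (pmF hN u)) := by
      refine Or.inr ⟨hu, pmF_adj hN u, fun hcon => hne' ?_⟩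
      rw [hτ]
      rw [pmF_eq hM₀ hcon, pmF_invol]
    have harc2 : (pmF hN u ∈ B ∧ M₀.Adj (pmF hN u) (τ u)) ∨
        (pmF hN u ∈ A ∧ N.Adj (pmF hN u) (τ u) ∧ ¬ M₀.Adj (pmF hN u) (τ u)) :=
      Or.inl ⟨h1, pmF_adj hM₀ (pmF hN u)⟩
    exact Relation.ReflTransGen.tail
      (r := fun u v => (u ∈ B ∧ M₀.Adj u v) ∨ (u ∈ A ∧ N.Adj u v ∧ ¬ M₀.Adj u v))
      (Relation.ReflTransGen.single harc1) harc2
  have hmain := reach_orbit τ _ A hAc hstep a haA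
  rw [hτs] at hmain
  have hvB : v ∈ B := side_switchA hc₀ hav haA
  have hlast : (pmF hN (pmF hM₀ a) ∈ B ∧ M₀.Adj (pmF hN (pmF hM₀ a)) v) ∨
      (pmF hN (pmF hM₀ a) ∈ A ∧ N.Adj (pmF hN (pmF hM₀ a)) v ∧
        ¬ M₀.Adj (pmF hN (pmF hM₀ a)) v) := by
    refine Or.inr ⟨?_, ?_, fun hcon => hne ?_⟩
    · exact side_switchB hdis huniv hcN (pmF_adj hN (pmF hM₀ a)) (hv ▸ hvB)
    · rw [hv]
      exact (pmF_adj hN (pmF hM₀ a)).symm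
    · have h3 : pmF hN (pmF hM₀ a) = pmF hM₀ v := pmF_eq hM₀ hcon.symm
      rw [hv, pmF_invol] at h3
      have h4 := congrArg (pmF hN) h3
      rw [pmF_invol] at h4
      rw [← h4]
      exact pmF_adj hM₀ a
  exact hmain.tail hlast

end walk

section chain
variable {γ : Type*} {r : γ → γ → Prop}

lemma chain_shrink : ∀ (n : ℕ) (l : List γ) (a b : γ), l.length ≤ n → List.Chain r a l →
    (a::l).getLast? = some b →
    ∃ l', List.Chain r a l' ∧ (a::l').getLast? = some b ∧ (a::l').Nodup ∧
      ∀ x ∈ l', x ∈ l := by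
  intro n
  induction n with
  | zero =>
    intro l a b hlen hch hlast
    have : l = [] := List.length_eq_zero_iff.mp (by omega)
    subst this
    exact ⟨[], List.Chain.nil, hlast, by simp, by simp⟩
  | succ n ih =>
    intro l a b hlen hch hlast
    by_cases hmem : a ∈ l
    · obtain ⟨l₁, l₂, rfl⟩ := List.append_of_mem hmem
      have hch2 : List.Chain r a l₂ := (List.isChain_cons_split.mp hch).2
      have hlast2 : (a::l₂).getLast? = some b := by
        have h1 : a :: (l₁ ++ a :: l₂) = (a :: l₁) ++ (a :: l₂) := by simp
        rw [h1, List.getLast?_append] at hlast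
        simpa using hlast
      have hlen2 : l₂.length ≤ n := by
        simp only [List.length_append, List.length_cons] at hlen
        omega
      obtain ⟨l', h1, h2, h3, h4⟩ := ih l₂ a b hlen2 hch2 hlast2
      exact ⟨l', h1, h2, h3, fun x hx => by simp [h4 x hx]⟩
    · cases l with
      | nil => exact ⟨[], List.Chain.nil, by simpa using hlast, by simp, by simp⟩
      | cons c lt =>
        obtain ⟨hac, hch'⟩ := List.chain_cons.mp hch
        have hlast' : (c::lt).getLast? = some b := by
          rw [List.getLast?_cons_cons] at hlast
          exact hlast
        have hlen' : lt.length ≤ n := by simp at hlen; omega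
        obtain ⟨l'', h1, h2, h3, h4⟩ := ih lt c b hlen' hch' hlast'
        refine ⟨c :: l'', List.chain_cons.mpr ⟨hac, h1⟩, ?_, ?_, ?_⟩
        · rw [List.getLast?_cons_cons]
          exact h2
        · rw [List.nodup_cons]
          refine ⟨?_, h3⟩
          intro hmem'
          rcases List.mem_cons.mp hmem' with h | h
          · exact hmem (h ▸ List.mem_cons_self)
          · exact hmem (List.mem_cons_of_mem c (h4 _ h))
        · intro x hx
          rcases List.mem_cons.mp hx with h | h
          · simp [h]
          · exact List.mem_cons_of_mem c (h4 _ h)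

lemma exists_nodup_chain_of_reflTransGen {a b : γ} (h : Relation.ReflTransGen r a b) :
    ∃ l, List.Chain r a l ∧ (a::l).getLast? = some b ∧ (a::l).Nodup := by
  obtain ⟨l, hch, hlast⟩ := List.exists_isChain_cons_of_relationReflTransGen h
  have hlast' : (a::l).getLast? = some b := by
    rw [List.getLast?_eq_getLast (by simp)]
    exact congrArg some hlast
  obtain ⟨l', h1, h2, h3, -⟩ := chain_shrink l.length l a b le_rfl hch hlast'
  exact ⟨l', h1, h2, h3⟩

end chain

section swap
variable {β : Type*} [Finite β] {G : SimpleGraph β} {M₀ : G.Subgraph} {A B : Set β}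

lemma mem_of_getLast?' {l : List β} {a : β} (h : l.getLast? = some a) : a ∈ l := by
  obtain ⟨h1, h2⟩ := List.mem_getLast?_eq_getLast (show a ∈ l.getLast? from h)
  rw [h2]
  exact List.getLast_mem h1

lemma swap_chain (hdis : Disjoint A B) (huniv : A ∪ B = Set.univ)
    (hM₀ : M₀.IsPerfectMatching)
    (hcG : ∀ ⦃u v : β⦄, G.Adj u v → (u ∈ A ↔ v ∈ B)) :
    ∀ (n : ℕ) (l : List β) (b a : β), l.length ≤ n → b ∈ B → a ∈ A →
    List.Chain (fun u v => (u ∈ B ∧ M₀.Adj u v) ∨ (u ∈ A ∧ G.Adj u v ∧ ¬ M₀.Adj u v)) b l →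
    (b::l).getLast? = some a → (b::l).Nodup →
    ∃ M' : G.Subgraph, M'.verts = Set.univ ∧
      (∀ v, v ≠ b → v ≠ a → ∃! w, M'.Adj v w) ∧
      (∀ w, ¬ M'.Adj b w) ∧ (∀ w, ¬ M'.Adj a w) ∧
      (∀ u v, u ∉ (b::l) → (M'.Adj u v ↔ M₀.Adj u v)) := by
  have hcM : ∀ ⦃u v : β⦄, M₀.Adj u v → (u ∈ A ↔ v ∈ B) := fun u v h => hcG (M₀.adj_sub h)
  have hAB : ∀ {x : β}, x ∈ A → x ∈ B → False := fun hx hy => hdis.le_bot ⟨hx, hy⟩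
  have hBnA : ∀ {x : β}, x ∈ B → x ∉ A := fun hx hy => hAB hy hx
  have hAnB : ∀ {x : β}, x ∈ A → x ∉ B := fun hx hy => hAB hx hy
  intro n
  induction n with
  | zero =>
    intro l b a hlen hb ha hch hlast hnd
    have : l = [] := List.length_eq_zero_iff.mp (by omega)
    subst this
    simp only [List.getLast?_singleton, Option.some.injEq] at hlast
    exact absurd (hlast ▸ ha) (hBnA hb)
  | succ n ih =>
    intro l b a hlen hb ha hch hlast hnd
    match l with
    | [] =>
      simp only [List.getLast?_singleton, Option.some.injEq] at hlast
      exact absurd (hlast ▸ ha) (hBnA hb)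
    | [w] =>
      have hwa0 : w = a := by simpa using hlast
      obtain ⟨harc, -⟩ := List.chain_cons.mp hch
      rw [hwa0] at harc
      have hba : M₀.Adj b a := by
        rcases harc with ⟨-, h⟩ | ⟨hbA, -⟩
        · exact h
        · exact absurd hbA (hBnA hb)
      have hpb : pmF hM₀ b = a := (pmF_eq hM₀ hba).symm
      have hpa : pmF hM₀ a = b := (pmF_eq hM₀ hba.symm).symm
      refine ⟨⟨Set.univ, fun u v => M₀.Adj u v ∧ u ≠ b ∧ u ≠ a ∧ v ≠ b ∧ v ≠ a,
        fun h => M₀.adj_sub h.1, fun _ => trivial,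
        ⟨fun u v h => ⟨h.1.symm, h.2.2.2.1, h.2.2.2.2, h.2.1, h.2.2.1⟩⟩⟩, rfl, ?_, ?_, ?_, ?_⟩
      · intro v hvb hva
        refine ⟨pmF hM₀ v, ⟨pmF_adj hM₀ v, hvb, hva, ?_, ?_⟩, ?_⟩
        · intro hcon
          have h5 := congrArg (pmF hM₀) hcon
          rw [pmF_invol, hpb] at h5
          exact hva h5
        · intro hcon
          have h5 := congrArg (pmF hM₀) hcon
          rw [pmF_invol, hpa] at h5
          exact hvb h5
        · rintro y ⟨hy, -⟩
          exact (pmF_eq hM₀ hy).symm ▸ rfl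
      · rintro w ⟨-, hmm, -⟩; exact hmm rfl
      · rintro w ⟨-, -, hmm, -⟩; exact hmm rfl
      · intro u v hu
        rw [hwa0] at hu
        simp only [List.mem_cons, not_or] at hu
        constructor
        · rintro ⟨h, -⟩; exact h
        · intro h
          refine ⟨h, hu.1, hu.2.1, ?_, ?_⟩
          · intro hcon
            rw [hcon] at h
            exact hu.2.1 ((pmF_eq hM₀ h.symm).trans hpb)
          · intro hcon
            rw [hcon] at h
            exact hu.1 ((pmF_eq hM₀ h.symm).trans hpa)
    | w :: w' :: lt =>
      obtain ⟨harc1, hch1⟩ := List.chain_cons.mp hch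
      obtain ⟨harc2, hch2⟩ := List.chain_cons.mp hch1
      have hbw : M₀.Adj b w := by
        rcases harc1 with ⟨-, h⟩ | ⟨hbA, -⟩
        · exact h
        · exact absurd hbA (hBnA hb)
      have hwA : w ∈ A := side_switchB hdis huniv hcM hbw hb
      have hww' : G.Adj w w' ∧ ¬ M₀.Adj w w' := by
        rcases harc2 with ⟨hwB, -⟩ | ⟨-, h1, h2⟩
        · exact absurd hwB (hAnB hwA)
        · exact ⟨h1, h2⟩
      have hw'B : w' ∈ B := (hcG hww'.1).mp hwA
      have hlast' : (w' :: lt).getLast? = some a := by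
        rw [List.getLast?_cons_cons, List.getLast?_cons_cons] at hlast
        exact hlast
      have hamem : a ∈ w' :: lt := mem_of_getLast?' hlast'
      have hnd1 : (w :: w' :: lt).Nodup := (List.nodup_cons.mp hnd).2
      have hnd2 : (w' :: lt).Nodup := (List.nodup_cons.mp hnd1).2
      have hbmem : b ∉ w :: w' :: lt := (List.nodup_cons.mp hnd).1
      have hbmem' : b ∉ w' :: lt := fun h => hbmem (List.mem_cons_of_mem _ h)
      have hwmem : w ∉ w' :: lt := (List.nodup_cons.mp hnd1).1
      have hwa : w ≠ a := fun h => hwmem (h ▸ hamem)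
      have hba : b ≠ a := fun h => hAB ha (h ▸ hb)
      have hbw' : b ≠ w' := fun h => hbmem (by simp [h])
      have hbwne : b ≠ w := fun h => hbmem (by simp [h])
      have hwne : w ≠ w' := fun h => hAB hwA (h ▸ hw'B)
      have haw' : a ≠ w' := fun h => hAB ha (h ▸ hw'B)
      have hpb : pmF hM₀ b = w := (pmF_eq hM₀ hbw).symm
      have hpw : pmF hM₀ w = b := (pmF_eq hM₀ hbw.symm).symm
      obtain ⟨M₁, hMv, hMm, hMb, hMa, hMagree⟩ :=
        ih lt w' a (by simp at hlen ⊢; omega) hw'B ha hch2 hlast' hnd2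
      refine ⟨⟨Set.univ, fun u v =>
        (M₁.Adj u v ∧ u ≠ b ∧ u ≠ w ∧ v ≠ b ∧ v ≠ w) ∨ (u = w ∧ v = w') ∨ (u = w' ∧ v = w),
        ?_, fun _ => trivial, ?_⟩, rfl, ?_, ?_, ?_, ?_⟩
      · rintro u v (⟨h, -⟩ | ⟨rfl, rfl⟩ | ⟨rfl, rfl⟩)
        · exact M₁.adj_sub h
        · exact hww'.1
        · exact hww'.1.symm
      · refine ⟨?_⟩
        rintro u v (⟨h, h2, h3, h4, h5⟩ | ⟨rfl, rfl⟩ | ⟨rfl, rfl⟩)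
        · exact Or.inl ⟨h.symm, h4, h5, h2, h3⟩
        · exact Or.inr (Or.inr ⟨rfl, rfl⟩)
        · exact Or.inr (Or.inl ⟨rfl, rfl⟩)
      · intro v hvb hva
        by_cases hvw : v = w
        · subst hvw
          refine ⟨w', Or.inr (Or.inl ⟨rfl, rfl⟩), ?_⟩
          rintro y (⟨-, -, hmm, -⟩ | ⟨-, rfl⟩ | ⟨hmm, -⟩)
          · exact absurd rfl hmm
          · rfl
          · exact absurd hmm hwne
        by_cases hvw' : v = w'
        · subst hvw'
          refine ⟨w, Or.inr (Or.inr ⟨rfl, rfl⟩), ?_⟩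
          rintro y (⟨hmm, -⟩ | ⟨hmm, -⟩ | ⟨-, rfl⟩)
          · exact absurd hmm (hMb y)
          · exact absurd hmm.symm hwne
          · rfl
        · obtain ⟨x, hx, hxu⟩ := hMm v hvw' hva
          have hxb : x ≠ b := by
            intro hcon
            have h' : M₀.Adj b v := (hMagree b v hbmem').mp (by rw [← hcon]; exact hx.symm)
            exact hvw ((pmF_eq hM₀ h').trans hpb)
          have hxw : x ≠ w := by
            intro hcon
            have h' : M₀.Adj w v := (hMagree w v hwmem).mp (by rw [← hcon]; exact hx.symm)
            exact hvb ((pmF_eq hM₀ h').trans hpw)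
          refine ⟨x, Or.inl ⟨hx, hvb, hvw, hxb, hxw⟩, ?_⟩
          rintro y (⟨hy, -⟩ | ⟨hmm, -⟩ | ⟨hmm, -⟩)
          · exact hxu y hy
          · exact absurd hmm hvw
          · exact absurd hmm hvw'
      · rintro y (⟨-, hmm, -⟩ | ⟨hmm, -⟩ | ⟨hmm, -⟩)
        · exact hmm rfl
        · exact hbwne hmm
        · exact hbw' hmm
      · rintro y (⟨hmm, -⟩ | ⟨hmm, -⟩ | ⟨hmm, -⟩)
        · exact hMa y hmm
        · exact hwa hmm.symm
        · exact haw' hmm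
      · intro u v hu
        have hu' : u ∉ w' :: lt := fun h => hu (by simp [h])
        have hub : u ≠ b := fun h => hu (by simp [h])
        have huw : u ≠ w := fun h => hu (by simp [h])
        constructor
        · rintro (⟨h, -⟩ | ⟨hmm, -⟩ | ⟨hmm, -⟩)
          · exact (hMagree u v hu').mp h
          · exact absurd hmm huw
          · exact absurd hmm (fun h2 => hu (by simp [h2]))
        · intro h
          refine Or.inl ⟨(hMagree u v hu').mpr h,
            hub, huw, ?_, ?_⟩
          · intro hcon
            rw [hcon] at h
            exact huw ((pmF_eq hM₀ h.symm).trans hpb)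
          · intro hcon
            rw [hcon] at h
            exact hub ((pmF_eq hM₀ h.symm).trans hpw)

end swap

section helpers
variable {γ : Type*}

lemma rtg_compose {r s : γ → γ → Prop} (h : ∀ u v, r u v → Relation.ReflTransGen s u v)
    {a b : γ} (hr : Relation.ReflTransGen r a b) : Relation.ReflTransGen s a b := by
  induction hr with
  | refl => exact Relation.ReflTransGen.refl
  | tail _ h2 ih => exact ih.trans (h _ _ h2)

lemma nontrivial_of_two_le_card (h : 2 ≤ Nat.card γ) : Nontrivial γ := by
  have hf : Finite γ := Nat.finite_of_card_ne_zero (by omega)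
  have := Fintype.ofFinite γ
  rw [Nat.card_eq_fintype_card] at h
  exact Fintype.one_lt_card_iff_nontrivial.mp (by omega)

lemma mc_exists_pm (G : SimpleGraph γ) (h : MatchingCovered G) :
    ∃ M : G.Subgraph, M.IsPerfectMatching := by
  obtain ⟨h2, hc, hedge⟩ := h
  have : Nontrivial γ := nontrivial_of_two_le_card h2
  obtain ⟨u, v, huv⟩ := exists_pair_ne γ
  obtain ⟨w⟩ := hc.preconnected u v
  have hex : ∃ a b, G.Adj a b := by
    induction w with
    | nil => exact absurd rfl huv
    | cons hadj _ _ => exact ⟨_, _, hadj⟩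
  obtain ⟨a, b, hab⟩ := hex
  obtain ⟨M, hM, -⟩ := hedge s(a, b) ((SimpleGraph.mem_edgeSet _).mpr hab)
  exact ⟨M, hM⟩

end helpers

/-- a removable edge of a conformal matching covered subgraph is
removable in the host graph. -/
theorem stmt13 {V : Type*} [Fintype V] (H : SimpleGraph V)
    (hMC : MatchingCovered H) (hbip : BipartiteGraph H)
    (K : H.Subgraph) (hKmc : MatchingCovered K.coe)
    (hconf : HasPerfMatching (H.induce (K.vertsᶜ : Set V)))
    (e : Sym2 ↥K.verts) (he : RemovableEdge K.coe e) :
    RemovableEdge H (Sym2.map Subtype.val e) := by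
  classical
  obtain ⟨x, y, rfl⟩ : ∃ x y, e = s(x, y) := by
    induction e using Sym2.ind with | _ a b => exact ⟨a, b, rfl⟩
  obtain ⟨heK, hKemc⟩ := he
  have hxy : K.coe.Adj x y := (SimpleGraph.mem_edgeSet _).mp heK
  have hxyH : H.Adj x.val y.val := K.adj_sub hxy
  rw [Sym2.map_pair_eq]
  obtain ⟨hcard, hconn, hedge⟩ := hMC
  obtain ⟨A, B, hABuniv, hABdis, hABadj⟩ := hbip
  refine ⟨(SimpleGraph.mem_edgeSet _).mpr hxyH, ?_⟩
  set HE := H.deleteEdges {s((x : V), (y : V))} with hHEdef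
  have hHEH : ∀ {u v : V}, HE.Adj u v → H.Adj u v := fun h =>
    (SimpleGraph.deleteEdges_adj.mp h).1
  have hsideV : ∀ t : V, t ∈ A ∨ t ∈ B := fun t => by
    have ht : t ∈ A ∪ B := by rw [hABuniv]; trivial
    exact ht
  have hAB : ∀ {t : V}, t ∈ A → t ∈ B → False := fun hx hy => hABdis.le_bot ⟨hx, hy⟩
  set GK := K.coe.deleteEdges {s(x, y)} with hGKdef
  have hGKtoHE : ∀ {p q : ↥K.verts}, GK.Adj p q → HE.Adj p.val q.val := by
    intro p q h
    obtain ⟨hadj, hne⟩ := SimpleGraph.deleteEdges_adj.mp h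
    refine SimpleGraph.deleteEdges_adj.mpr ⟨K.adj_sub hadj, ?_⟩
    intro hcon
    simp only [Set.mem_singleton_iff] at hcon hne
    apply hne
    apply Sym2.map.injective (Subtype.val_injective)
    rw [Sym2.map_pair_eq, Sym2.map_pair_eq]
    exact hcon
  obtain ⟨N₀, hN₀⟩ := mc_exists_pm GK hKemc
  obtain ⟨Mout, hMout⟩ := hconf
  have hxK : (x : V) ∈ K.verts := x.2
  have hyK : (y : V) ∈ K.verts := y.2
  have hMoutH : ∀ {p q : ↥(K.vertsᶜ : Set V)}, Mout.Adj p q → HE.Adj p.val q.val := by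
    intro p q h
    have hadj : H.Adj p.val q.val := Mout.adj_sub h
    refine SimpleGraph.deleteEdges_adj.mpr ⟨hadj, ?_⟩
    intro hcon
    simp only [Set.mem_singleton_iff] at hcon
    rcases Sym2.eq_iff.mp hcon with ⟨h1, -⟩ | ⟨h1, -⟩
    · exact p.2 (show p.val ∈ K.verts by rw [h1]; exact hxK)
    · exact p.2 (show p.val ∈ K.verts by rw [h1]; exact hyK)
  let M₀ : HE.Subgraph :=
    { verts := Set.univ
      Adj := fun u v => (∃ (hu : u ∈ K.verts) (hv : v ∈ K.verts), N₀.Adj ⟨u, hu⟩ ⟨v, hv⟩) ∨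
        (∃ (hu : u ∈ (K.vertsᶜ : Set V)) (hv : v ∈ (K.vertsᶜ : Set V)),
          Mout.Adj ⟨u, hu⟩ ⟨v, hv⟩)
      adj_sub := by
        rintro u v (⟨hu, hv, h⟩ | ⟨hu, hv, h⟩)
        · exact hGKtoHE (N₀.adj_sub h)
        · exact hMoutH h
      edge_vert := fun _ => trivial
      symm := by
        refine ⟨?_⟩
        rintro u v (⟨hu, hv, h⟩ | ⟨hu, hv, h⟩)
        · exact Or.inl ⟨hv, hu, h.symm⟩
        · exact Or.inr ⟨hv, hu, h.symm⟩ }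
  have hM₀adj : ∀ {u v : V}, M₀.Adj u v ↔
      ((∃ (hu : u ∈ K.verts) (hv : v ∈ K.verts), N₀.Adj ⟨u, hu⟩ ⟨v, hv⟩) ∨
        (∃ (hu : u ∈ (K.vertsᶜ : Set V)) (hv : v ∈ (K.vertsᶜ : Set V)),
          Mout.Adj ⟨u, hu⟩ ⟨v, hv⟩)) := fun {u v} => Iff.rfl
  have hM₀pm : M₀.IsPerfectMatching := by
    rw [SimpleGraph.Subgraph.isPerfectMatching_iff]
    intro v
    by_cases hv : v ∈ K.verts
    · refine ⟨(pmF hN₀ ⟨v, hv⟩).val,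
        Or.inl ⟨hv, (pmF hN₀ ⟨v, hv⟩).2, pmF_adj hN₀ ⟨v, hv⟩⟩, ?_⟩
      rintro y' (⟨hu', hv', h⟩ | ⟨hu', -, -⟩)
      · exact congrArg Subtype.val (pmF_eq hN₀ h)
      · exact absurd hv hu'
    · have hv' : v ∈ (K.vertsᶜ : Set V) := hv
      refine ⟨(pmF hMout ⟨v, hv'⟩).val,
        Or.inr ⟨hv', (pmF hMout ⟨v, hv'⟩).2, pmF_adj hMout ⟨v, hv'⟩⟩, ?_⟩
      rintro y' (⟨hu', -, -⟩ | ⟨hu', hv'', h⟩)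
      · exact absurd hu' hv
      · exact congrArg Subtype.val (pmF_eq hMout h)
  have hM₀N : ∀ {u v : V} (hu : u ∈ K.verts), M₀.Adj u v →
      ∃ (hv : v ∈ K.verts), N₀.Adj ⟨u, hu⟩ ⟨v, hv⟩ := by
    rintro u v hu (⟨hu', hv, h⟩ | ⟨hu', -, -⟩)
    · exact ⟨hv, h⟩
    · exact absurd hu hu'
  have hcHE : ∀ ⦃u v : V⦄, HE.Adj u v → (u ∈ A ↔ v ∈ B) := fun u v h => hABadj (hHEH h)
  have hcM₀ : ∀ ⦃u v : V⦄, M₀.Adj u v → (u ∈ A ↔ v ∈ B) := fun u v h => hcHE (M₀.adj_sub h)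
  set AK : Set ↥K.verts := Subtype.val ⁻¹' A with hAKdef
  set BK : Set ↥K.verts := Subtype.val ⁻¹' B with hBKdef
  have hdisK : Disjoint AK BK := Disjoint.preimage _ hABdis
  have hunivK : AK ∪ BK = Set.univ := by
    rw [hAKdef, hBKdef, ← Set.preimage_union, hABuniv, Set.preimage_univ]
  have hcGK : ∀ ⦃p q : ↥K.verts⦄, GK.Adj p q → (p ∈ AK ↔ q ∈ BK) :=
    fun p q h => hABadj (hHEH (hGKtoHE h))
  set RelV := fun u v : V => (u ∈ B ∧ M₀.Adj u v) ∨ (u ∈ A ∧ HE.Adj u v ∧ ¬ M₀.Adj u v)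
    with hRelVdef
  have htransK : ∀ (N : GK.Subgraph), ∀ {p q : ↥K.verts}, Relation.ReflTransGen
      (fun p q => (p ∈ BK ∧ N₀.Adj p q) ∨ (p ∈ AK ∧ N.Adj p q ∧ ¬ N₀.Adj p q)) p q →
      Relation.ReflTransGen RelV p.val q.val := by
    intro N p q hr
    refine Relation.ReflTransGen.lift Subtype.val ?_ _ _ hr
    rintro p' q' (⟨hpB, h⟩ | ⟨hpA, h1, h2⟩)
    · exact Or.inl ⟨hpB, Or.inl ⟨p'.2, q'.2, h⟩⟩
    · refine Or.inr ⟨hpA, hGKtoHE (N.adj_sub h1), ?_⟩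
      intro hcon
      obtain ⟨hv, h⟩ := hM₀N p'.2 hcon
      exact h2 h
  have perB : ∀ p q : ↥K.verts, GK.Adj p q → p.val ∈ B →
      Relation.ReflTransGen RelV p.val q.val := by
    intro p q hpq hpB
    obtain ⟨NN, hNN, hNNe⟩ := hKemc.2.2 s(p, q) ((SimpleGraph.mem_edgeSet _).mpr hpq)
    have hNNadj : NN.Adj p q := SimpleGraph.Subgraph.mem_edgeSet.mp hNNe
    exact htransK NN (walkBA hdisK hunivK hN₀ hNN
      (fun _ _ h => hcGK (N₀.adj_sub h)) (fun _ _ h => hcGK (NN.adj_sub h)) hpB hNNadj)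
  have perA : ∀ p q : ↥K.verts, GK.Adj p q → p.val ∈ A →
      Relation.ReflTransGen RelV p.val q.val := by
    intro p q hpq hpA
    by_cases hN₀pq : N₀.Adj p q
    · have hqval : pmF hN₀ p = q := (pmF_eq hN₀ hN₀pq).symm
      have hz : ∃ z, GK.Adj p z ∧ z ≠ q := by
        by_contra hno
        push_neg at hno
        have hqonly : ∀ z, GK.Adj q z → z = p := by
          intro z hqz
          by_contra hzp
          obtain ⟨NN, hNN, hNNe⟩ := hKemc.2.2 s(q, z) ((SimpleGraph.mem_edgeSet _).mpr hqz)
          have h1 : NN.Adj q z := SimpleGraph.Subgraph.mem_edgeSet.mp hNNe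
          have h2 : pmF hNN p = q := hno _ (NN.adj_sub (pmF_adj hNN p))
          have h3 : NN.Adj q p := by
            rw [← h2]
            exact (pmF_adj hNN p).symm
          exact hzp ((pmF_eq hNN h1).trans (pmF_eq hNN h3).symm)
        have stay : ∀ (r s : ↥K.verts), GK.Walk r s →
            r ∈ ({p, q} : Set ↥K.verts) → s ∈ ({p, q} : Set ↥K.verts) := by
          intro r s w
          induction w with
          | nil => exact id
          | cons hadj w ih =>
            intro hr
            apply ih
            simp only [Set.mem_insert_iff, Set.mem_singleton_iff] at hr ⊢
            rcases hr with rfl | rfl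
            · exact Or.inr (hno _ hadj)
            · exact Or.inl (hqonly _ hadj)
        obtain ⟨w1⟩ := hKemc.2.1.preconnected p x
        obtain ⟨w2⟩ := hKemc.2.1.preconnected p y
        have hxmem := stay p x w1 (by simp)
        have hymem := stay p y w2 (by simp)
        have hxyne : x ≠ y := hxy.ne
        simp only [Set.mem_insert_iff, Set.mem_singleton_iff] at hxmem hymem
        have hcon : s(x, y) = s(p, q) := by
          rcases hxmem with rfl | rfl <;> rcases hymem with rfl | rfl
          · exact absurd rfl hxyne
          · rfl
          · exact Sym2.eq_swap
          · exact absurd rfl hxyne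
        exact (SimpleGraph.deleteEdges_adj.mp hpq).2
          (Set.mem_singleton_iff.mpr hcon.symm)
      obtain ⟨z, hpz, hzq⟩ := hz
      obtain ⟨NN, hNN, hNNe⟩ := hKemc.2.2 s(p, z) ((SimpleGraph.mem_edgeSet _).mpr hpz)
      have h1 : NN.Adj p z := SimpleGraph.Subgraph.mem_edgeSet.mp hNNe
      have hnecond : ¬ N₀.Adj p (pmF hNN p) := by
        rw [← pmF_eq hNN h1]
        intro hcon
        exact hzq ((pmF_eq hN₀ hcon).trans hqval)
      exact htransK NN (walkAB hdisK hunivK hN₀ hNN (fun _ _ h => hcGK (N₀.adj_sub h))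
        (fun _ _ h => hcGK (NN.adj_sub h)) hpA hN₀pq hnecond)
    · refine Relation.ReflTransGen.single (Or.inr ⟨hpA, hGKtoHE hpq, ?_⟩)
      intro hcon
      obtain ⟨hv, h⟩ := hM₀N p.2 hcon
      exact hN₀pq h
  have C1 : ∀ p q : ↥K.verts, Relation.ReflTransGen RelV p.val q.val := by
    intro p q
    obtain ⟨w⟩ := hKemc.2.1.preconnected p q
    induction w with
    | nil => exact Relation.ReflTransGen.refl
    | cons hadj w ih =>
      refine Relation.ReflTransGen.trans ?_ ih
      rcases hsideV _ with hA | hB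
      · exact perA _ _ hadj hA
      · exact perB _ _ hadj hB
  have hRelVtoReach : ∀ {u v : V}, Relation.ReflTransGen RelV u v → HE.Reachable u v := by
    intro u v h
    induction h with
    | refl => exact SimpleGraph.Reachable.refl _
    | tail _ h2 ih =>
      refine ih.trans (SimpleGraph.Adj.reachable ?_)
      rcases h2 with ⟨-, h3⟩ | ⟨-, h3, -⟩
      · exact M₀.adj_sub h3
      · exact h3
  have hHEconn : HE.Connected := by
    haveI : Nonempty V := hconn.nonempty
    refine SimpleGraph.Connected.mk ?_
    intro u v
    obtain ⟨w⟩ := hconn.preconnected u v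
    induction w with
    | nil => exact SimpleGraph.Reachable.refl _
    | cons hadj w ih =>
      refine SimpleGraph.Reachable.trans ?_ ih
      rename_i u' v' w'
      by_cases hce : s(u', v') = s((x : V), (y : V))
      · rcases Sym2.eq_iff.mp hce with ⟨h1, h2⟩ | ⟨h1, h2⟩
        · rw [h1, h2]
          exact hRelVtoReach (C1 x y)
        · rw [h1, h2]
          exact hRelVtoReach (C1 y x)
      · exact (SimpleGraph.deleteEdges_adj.mpr ⟨hadj, by simpa using hce⟩).reachable
  have hmain : ∀ a b : V, HE.Adj a b → a ∈ A → b ∈ B →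
      ∃ M' : HE.Subgraph, M'.IsPerfectMatching ∧ M'.Adj a b := by
    intro a b hab haA hbB
    by_cases hM₀ab : M₀.Adj a b
    · exact ⟨M₀, hM₀pm, hM₀ab⟩
    obtain ⟨M, hM, hMe⟩ := hedge s(a, b) ((SimpleGraph.mem_edgeSet _).mpr (hHEH hab))
    have hMab : M.Adj b a := (SimpleGraph.Subgraph.mem_edgeSet.mp hMe).symm
    have hwalk := walkBA hABdis hABuniv hM₀pm hM hcM₀
      (fun u v h => hABadj (M.adj_sub h)) hbB hMab
    have htrail : Relation.ReflTransGen RelV b a := by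
      refine rtg_compose ?_ hwalk
      rintro u v (⟨huB, h⟩ | ⟨huA, h1, h2⟩)
      · exact Relation.ReflTransGen.single (Or.inl ⟨huB, h⟩)
      · by_cases hce : s(u, v) = s((x : V), (y : V))
        · rcases Sym2.eq_iff.mp hce with ⟨h3, h4⟩ | ⟨h3, h4⟩
          · rw [h3, h4]
            exact C1 x y
          · rw [h3, h4]
            exact C1 y x
        · exact Relation.ReflTransGen.single (Or.inr ⟨huA,
            SimpleGraph.deleteEdges_adj.mpr ⟨M.adj_sub h1, by simpa using hce⟩, h2⟩)
    obtain ⟨l, hchain, hlastl, hnd⟩ := exists_nodup_chain_of_reflTransGen htrail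
    obtain ⟨M', hM'v, hM'm, hM'b, hM'a, -⟩ :=
      swap_chain hABdis hABuniv hM₀pm hcHE l.length l b a le_rfl hbB haA hchain hlastl hnd
    have hsub : ∀ u w : V, (HE.subgraphOfAdj hab).Adj u w ↔ s(a, b) = s(u, w) :=
      fun u w => (SimpleGraph.subgraphOfAdj_adj HE hab u w).to_iff
    have hbna : b ≠ a := fun h => hAB haA (h ▸ hbB)
    refine ⟨M' ⊔ HE.subgraphOfAdj hab, ?_,
      SimpleGraph.Subgraph.sup_adj.mpr (Or.inr ((hsub a b).mpr rfl))⟩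
    rw [SimpleGraph.Subgraph.isPerfectMatching_iff]
    intro v
    by_cases hva : v = a
    · subst hva
      refine ⟨b, SimpleGraph.Subgraph.sup_adj.mpr (Or.inr ((hsub v b).mpr rfl)), ?_⟩
      intro z hz
      rcases SimpleGraph.Subgraph.sup_adj.mp hz with h | h
      · exact absurd h (hM'a z)
      · rcases Sym2.eq_iff.mp ((hsub v z).mp h) with ⟨-, h2⟩ | ⟨h1, h2⟩
        · exact h2.symm
        · exact h1.symm.trans h2.symm
    by_cases hvb : v = b
    · subst hvb
      refine ⟨a, SimpleGraph.Subgraph.sup_adj.mpr (Or.inr ((hsub v a).mpr Sym2.eq_swap)), ?_⟩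
      intro z hz
      rcases SimpleGraph.Subgraph.sup_adj.mp hz with h | h
      · exact absurd h (hM'b z)
      · rcases Sym2.eq_iff.mp ((hsub v z).mp h) with ⟨h1, -⟩ | ⟨h1, h2⟩
        · exact absurd h1 hbna.symm
        · exact h1.symm
    · obtain ⟨z, hz, hzu⟩ := hM'm v hvb hva
      refine ⟨z, SimpleGraph.Subgraph.sup_adj.mpr (Or.inl hz), ?_⟩
      intro z' hz'
      rcases SimpleGraph.Subgraph.sup_adj.mp hz' with h | h
      · exact hzu z' h
      · rcases Sym2.eq_iff.mp ((hsub v z').mp h) with ⟨h1, -⟩ | ⟨-, h2⟩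
        · exact absurd h1.symm hva
        · exact absurd h2.symm hvb
  refine ⟨hcard, hHEconn, ?_⟩
  intro f hf
  obtain ⟨a, b, rfl⟩ : ∃ a b, f = s(a, b) := by
    induction f using Sym2.ind with | _ u v => exact ⟨u, v, rfl⟩
  have hab : HE.Adj a b := (SimpleGraph.mem_edgeSet _).mp hf
  rcases hsideV a with haA | haB
  · obtain ⟨M', h1, h2⟩ := hmain a b hab haA ((hcHE hab).mp haA)
    exact ⟨M', h1, SimpleGraph.Subgraph.mem_edgeSet.mpr h2⟩
  · have hbA : b ∈ A := by
      have hiff := hcHE hab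
      have hna : a ∉ A := fun h => hAB h haB
      have hnb : b ∉ B := fun h => hna (hiff.mpr h)
      rcases hsideV b with h | h
      · exact h
      · exact absurd h hnb
    obtain ⟨M', h1, h2⟩ := hmain b a hab.symm hbA haB
    exact ⟨M', h1, SimpleGraph.Subgraph.mem_edgeSet.mpr h2.symm⟩
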